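/- Let Π be a monotone property on a finite set U and suppose the supergraph algorithm is run from a seed minimal Π-set S: maintain a set 𝒪 of generated minimal Π-sets, initially {S}; repeatedly, for X ∈ 𝒪, x ∈ X, and each minimal Y ⊆ U \ {x} with |Y| ≤ k such that (X \ {x}) ∪ Y is a Π-set, add to 𝒪 some minimal Π-set X' ⊆ (X \ {x}) ∪ Y provided |X'| < |S| + k. Then when the algorithm terminates, 𝒪 contains every minimal Π-set Z of U with |Z| ≤ k, and every member of 𝒪 has cardinality less than |S| + k. -/

import Mathlib

theorem stmt17 {α : Type*} [DecidableEq α] (U : Finset α) (P : Finset α → Prop)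
    (k : ℕ) (hk : 1 ≤ k)
    (hmono : ∀ X Y : Finset α, X ⊆ Y → Y ⊆ U → P X → P Y)
    (comp : Finset α → Finset α)
    (hcomp : ∀ A : Finset α, A ⊆ U → P A →
      comp A ⊆ A ∧ P (comp A) ∧ ∀ T ⊂ comp A, ¬ P T)
    (S : Finset α) (hSU : S ⊆ U) (hSP : P S) (hSmin : ∀ T ⊂ S, ¬ P T)
    (O : Finset (Finset α)) (hSO : S ∈ O)
    (hOmem : ∀ X ∈ O, X ⊆ U ∧ P X ∧ (∀ T ⊂ X, ¬ P T) ∧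
      (X = S ∨ X.card < S.card + k))
    (hclosed : ∀ X ∈ O, ∀ x ∈ X, ∀ Y : Finset α, Y ⊆ U.erase x → Y.card ≤ k →
      P (X.erase x ∪ Y) → (∀ Y' ⊂ Y, ¬ P (X.erase x ∪ Y')) →
      (comp (X.erase x ∪ Y)).card < S.card + k → comp (X.erase x ∪ Y) ∈ O) :
    (∀ Z : Finset α, Z ⊆ U → P Z → (∀ T ⊂ Z, ¬ P T) → Z.card ≤ k → Z ∈ O) ∧
    (∀ X ∈ O, X.card < S.card + k) := by
  classical
  constructor
  · intro Z hZU hZP hZmin hZk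
    have key : ∀ n : ℕ, n ≤ S.card + k → ∀ X ∈ O, (X ∪ Z).card ≤ n → Z ∈ O := by
      intro n
      induction n with
      | zero =>
        intro _ X hX hcard
        have hXZ : X ∪ Z = ∅ := Finset.card_eq_zero.mp (Nat.le_zero.mp hcard)
        have hZe : Z = ∅ := by
          apply Finset.eq_empty_of_forall_notMem
          intro a ha
          have : a ∈ X ∪ Z := Finset.mem_union_right _ ha
          rw [hXZ] at this
          exact absurd this (Finset.notMem_empty a)
        have hXe : X = ∅ := by
          apply Finset.eq_empty_of_forall_notMem
          intro a ha
          have : a ∈ X ∪ Z := Finset.mem_union_left _ ha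
          rw [hXZ] at this
          exact absurd this (Finset.notMem_empty a)
        rw [hZe, ← hXe]
        exact hX
      | succ m ih =>
        intro hn X hX hcard
        by_cases hXZ : Z = X
        · exact hXZ ▸ hX
        obtain ⟨hXU, hXP, hXmin, _⟩ := hOmem X hX
        have hex : ∃ x ∈ X, x ∉ Z := by
          by_contra h
          push_neg at h
          have hsub : X ⊂ Z := ⟨h, fun hZX => hXZ (Finset.Subset.antisymm hZX h)⟩
          exact hZmin X hsub hXP
        obtain ⟨x, hxX, hxZ⟩ := hex
        set s := Z.powerset.filter (fun Y => P (X.erase x ∪ Y)) with hs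
        have hZs : Z ∈ s := by
          rw [hs, Finset.mem_filter, Finset.mem_powerset]
          refine ⟨Finset.Subset.refl Z, ?_⟩
          exact hmono Z (X.erase x ∪ Z) Finset.subset_union_right
            (Finset.union_subset ((Finset.erase_subset x X).trans hXU) hZU) hZP
        obtain ⟨Y, hYs, hYmin⟩ : ∃ Y ∈ s, ∀ Y' ∈ s, ¬ Y' < Y := by
          obtain ⟨Y, hY⟩ := Finset.exists_minimal (s := s) ⟨Z, hZs⟩
          exact ⟨Y, hY.1, fun Y' h1 h2 => h2.not_ge (hY.2 h1 h2.le)⟩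
        rw [hs, Finset.mem_filter, Finset.mem_powerset] at hYs
        obtain ⟨hYZ, hYP⟩ := hYs
        have hYU : Y ⊆ U.erase x := by
          intro a ha
          rw [Finset.mem_erase]
          exact ⟨fun hax => hxZ (hax ▸ hYZ ha), hZU (hYZ ha)⟩
        have hYk : Y.card ≤ k := le_trans (Finset.card_le_card hYZ) hZk
        have hYmin' : ∀ Y' ⊂ Y, ¬ P (X.erase x ∪ Y') := by
          intro Y' hY' hPY'
          apply hYmin Y' _ hY'
          rw [hs, Finset.mem_filter, Finset.mem_powerset]
          exact ⟨(hY'.subset).trans hYZ, hPY'⟩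
        set A := X.erase x ∪ Y with hA
        have hAU : A ⊆ U :=
          Finset.union_subset ((Finset.erase_subset x X).trans hXU) (hYZ.trans hZU)
        obtain ⟨hWA, hWP, hWmin⟩ := hcomp A hAU hYP
        set W := comp A with hW
        -- card bound
        have hsub1 : W ∪ Z ⊆ X.erase x ∪ Z := by
          apply Finset.union_subset _ Finset.subset_union_right
          refine hWA.trans ?_
          exact Finset.union_subset_union_right hYZ
        have heq : X.erase x ∪ Z = (X ∪ Z).erase x := by
          ext a
          simp only [Finset.mem_union, Finset.mem_erase]
          constructor
          · rintro (⟨hax, haX⟩ | haZ)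
            · exact ⟨hax, Or.inl haX⟩
            · exact ⟨fun hax => hxZ (hax ▸ haZ), Or.inr haZ⟩
          · rintro ⟨hax, haX | haZ⟩
            · exact Or.inl ⟨hax, haX⟩
            · exact Or.inr haZ
        have hlt : (W ∪ Z).card < (X ∪ Z).card := by
          calc (W ∪ Z).card ≤ (X.erase x ∪ Z).card := Finset.card_le_card hsub1
            _ = ((X ∪ Z).erase x).card := by rw [heq]
            _ < (X ∪ Z).card :=
              Finset.card_erase_lt_of_mem (Finset.mem_union_left _ hxX)
        have hWcard : W.card < S.card + k := by
          calc W.card ≤ (W ∪ Z).card := Finset.card_le_card Finset.subset_union_left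
            _ < (X ∪ Z).card := hlt
            _ ≤ m + 1 := hcard
            _ ≤ S.card + k := hn
        have hWO : W ∈ O := hclosed X hX x hxX Y hYU hYk hYP hYmin' hWcard
        exact ih (Nat.le_of_succ_le hn) W hWO (Nat.lt_succ_iff.mp (lt_of_lt_of_le hlt hcard))
    apply key (S.card + k) (le_refl _) S hSO
    calc (S ∪ Z).card ≤ S.card + Z.card := Finset.card_union_le S Z
      _ ≤ S.card + k := Nat.add_le_add_left hZk _
  · intro X hX
    rcases (hOmem X hX).2.2.2 with h | h
    · rw [h]; exact Nat.lt_add_of_pos_right hk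
    · exact h
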